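/- The number Z_n of skew-symmetric (n,n)-clans satisfies Z_0 = 1, Z_1 = 3, and the recurrence Z_n = 3·Z_{n−1} + 2(n−1)·Z_{n−2} for all n ≥ 2. -/

import Mathlib

/-- A skew-symmetric `(n,n)`-clan, encoded (via the standard bijection with signed
involutions) as a pair `(σ, s)` where `σ` is an involution of the `2n` positions whose
2-cycles are the pairs of positions carrying matching natural numbers, and `s` records
the signs at the fixed points (`true` = `+`, `false` = `−`; `s` is normalized to `true`
on non-fixed points).  The conditions say: `σ` is an involution; `s` is normalized;
there are equally many `+`'s and `−`'s among the sign symbols; and the clan equals its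
reverse with all signs interchanged (`Fin.rev` is the reflection `i ↦ 2n+1−i`). -/
def IsSkewClan (n : ℕ) (σ : Equiv.Perm (Fin (2 * n))) (s : Fin (2 * n) → Bool) : Prop :=
  Function.Involutive σ ∧
  (∀ i, σ i ≠ i → s i = true) ∧
  (Finset.univ.filter (fun i => σ i = i ∧ s i = true)).card =
    (Finset.univ.filter (fun i => σ i = i ∧ s i = false)).card ∧
  (∀ i, σ (Fin.rev i) = Fin.rev (σ i)) ∧
  (∀ i, σ i = i → s (Fin.rev i) = !(s i))

/-- `Z_n`, the number of skew-symmetric `(n,n)`-clans. -/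
noncomputable def Znum (n : ℕ) : ℕ :=
  Nat.card {p : Equiv.Perm (Fin (2 * n)) × (Fin (2 * n) → Bool) // IsSkewClan n p.1 p.2}

open Finset Equiv

namespace SkewClanAux

lemma rev_ne {n : ℕ} (i : Fin (2*n)) : Fin.rev i ≠ i := by
  intro h
  have h2 := congrArg Fin.val h
  rw [Fin.val_rev] at h2
  have := i.isLt
  omega

lemma balance {n : ℕ} (σ : Equiv.Perm (Fin (2*n))) (s : Fin (2*n) → Bool)
    (h4 : ∀ i, σ (Fin.rev i) = Fin.rev (σ i))
    (h5 : ∀ i, σ i = i → s (Fin.rev i) = !(s i)) :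
    (Finset.univ.filter (fun i => σ i = i ∧ s i = true)).card =
    (Finset.univ.filter (fun i => σ i = i ∧ s i = false)).card := by
  apply Finset.card_nbij' Fin.rev Fin.rev
  · intro a ha
    simp only [mem_coe, mem_filter, mem_univ, true_and] at ha ⊢
    refine ⟨by rw [h4, ha.1], ?_⟩
    rw [h5 a ha.1, ha.2]; rfl
  · intro a ha
    simp only [mem_coe, mem_filter, mem_univ, true_and] at ha ⊢
    refine ⟨by rw [h4, ha.1], ?_⟩
    have := h5 (Fin.rev a) (by rw [h4, ha.1])
    rw [Fin.rev_rev] at this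
    rw [ha.2] at this
    simpa using this.symm
  · intro a _; exact Fin.rev_rev a
  · intro a _; exact Fin.rev_rev a

section OrderIsoRev

/-- The order iso commutes with rev when the set is rev-invariant. -/
lemma orderIsoOfFin_rev {N m : ℕ} (A : Finset (Fin N)) (hA : ∀ i, i ∈ A → Fin.rev i ∈ A)
    (hcard : A.card = m) (i : Fin m) :
    ((A.orderIsoOfFin hcard (Fin.rev i) : Fin N)) = Fin.rev (A.orderIsoOfFin hcard i) := by
  set e := A.orderIsoOfFin hcard with he
  let e2 : Fin m ≃o A :=
    { toFun := fun i => ⟨Fin.rev (e (Fin.rev i) : Fin N), hA _ (e (Fin.rev i)).2⟩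
      invFun := fun a => Fin.rev (e.symm ⟨Fin.rev (a : Fin N), hA _ a.2⟩)
      left_inv := by
        intro i
        simp [Fin.rev_rev]
      right_inv := by
        intro a
        simp [Fin.rev_rev]
      map_rel_iff' := by
        intro i j
        simp only [Equiv.coe_fn_mk, ← Subtype.coe_le_coe, Fin.rev_le_rev]
        rw [show ((e (Fin.rev j) : Fin N) ≤ (e (Fin.rev i) : Fin N)) ↔ e (Fin.rev j) ≤ e (Fin.rev i) from Iff.rfl]
        rw [e.le_iff_le, Fin.rev_le_rev] }
  have : e2 = e := Subsingleton.elim _ _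
  have h2 := congrArg (fun f => ((f i : A) : Fin N)) this
  simp only [e2] at h2
  change Fin.rev (e (Fin.rev i) : Fin N) = (e i : Fin N) at h2
  rw [← h2, Fin.rev_rev]

end OrderIsoRev

end SkewClanAux

namespace SkewClanAux

section Glue

variable {n m : ℕ} (B : Finset (Fin (2*n))) (hcard : Bᶜ.card = 2*m)

/-- order iso enumerating the complement of `B`. -/
def em : Fin (2*m) ≃o {x : Fin (2*n) // x ∈ Bᶜ} := Bᶜ.orderIsoOfFin hcard

variable (hB : ∀ i, i ∈ B → Fin.rev i ∈ B)

include hB in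
lemma compl_rev : ∀ (i : Fin (2*n)), i ∈ Bᶜ → Fin.rev i ∈ Bᶜ := by
  intro i hi
  simp only [Finset.mem_compl] at hi ⊢
  intro h
  exact hi (by simpa using hB _ h)

include hB in
lemma em_rev (i : Fin (2*m)) :
    ((em B hcard (Fin.rev i) : Fin (2*n))) = Fin.rev (em B hcard i) :=
  orderIsoOfFin_rev Bᶜ (compl_rev B hB) hcard i

include hB in
lemma em_symm_rev (x : {x : Fin (2*n) // x ∈ Bᶜ}) (hx : Fin.rev (x : Fin (2*n)) ∈ Bᶜ) :
    (em B hcard).symm ⟨Fin.rev (x : Fin (2*n)), hx⟩ = Fin.rev ((em B hcard).symm x) := by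
  apply (em B hcard).injective
  apply Subtype.ext
  rw [em_rev B hcard hB]
  simp

variable (b : Fin (2*n) → Fin (2*n)) (σ' : Equiv.Perm (Fin (2*m)))
  (t : Fin (2*n) → Bool) (s' : Fin (2*m) → Bool)

/-- glue an involution on `B` with a permutation transported from `Fin (2*m)`. -/
def glueFun : Fin (2*n) → Fin (2*n) := fun i =>
  if h : i ∈ Bᶜ then ((em B hcard) (σ' ((em B hcard).symm ⟨i, h⟩)) : Fin (2*n)) else b i

def glueSign : Fin (2*n) → Bool := fun i =>
  if h : i ∈ Bᶜ then s' ((em B hcard).symm ⟨i, h⟩) else t i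

lemma glueFun_mem_compl {i : Fin (2*n)} (h : i ∈ Bᶜ) :
    glueFun B hcard b σ' i ∈ Bᶜ := by
  rw [glueFun, dif_pos h]
  exact ((em B hcard) (σ' ((em B hcard).symm ⟨i, h⟩))).2

lemma glueFun_of_mem {i : Fin (2*n)} (h : i ∈ B) :
    glueFun B hcard b σ' i = b i := by
  rw [glueFun, dif_neg (by simpa using h)]

lemma glueFun_em (j : Fin (2*m)) :
    glueFun B hcard b σ' ((em B hcard) j : Fin (2*n)) = ((em B hcard) (σ' j) : Fin (2*n)) := by
  rw [glueFun, dif_pos ((em B hcard) j).2]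
  congr 2
  have h2 : (⟨((em B hcard) j : Fin (2*n)), ((em B hcard) j).2⟩ : {x : Fin (2*n) // x ∈ Bᶜ}) = (em B hcard) j := Subtype.ext rfl
  rw [h2, OrderIso.symm_apply_apply]

variable (hbB : ∀ i ∈ B, b i ∈ B) (hbinv : ∀ i ∈ B, b (b i) = i)

include hbB hbinv in
lemma glueFun_involutive (hσ' : Function.Involutive σ') :
    Function.Involutive (glueFun B hcard b σ') := by
  intro i
  by_cases h : i ∈ Bᶜ
  · have h1 : glueFun B hcard b σ' i = ((em B hcard) (σ' ((em B hcard).symm ⟨i, h⟩)) : Fin (2*n)) := by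
      rw [glueFun, dif_pos h]
    rw [h1, glueFun_em, hσ']
    simp
  · have h' : i ∈ B := by simpa using h
    rw [glueFun_of_mem B hcard b σ' h', glueFun_of_mem B hcard b σ' (hbB i h')]
    exact hbinv i h'

/-- The glued permutation. -/
def gluePerm (hσ' : Function.Involutive σ') : Equiv.Perm (Fin (2*n)) :=
  (glueFun_involutive B hcard b σ' hbB hbinv hσ').toPerm

include hB in
lemma extend_isSkewClan
    (hbrev : ∀ i ∈ B, b (Fin.rev i) = Fin.rev (b i))
    (ht1 : ∀ i ∈ B, b i ≠ i → t i = true)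
    (ht2 : ∀ i ∈ B, b i = i → t (Fin.rev i) = !(t i))
    (h : IsSkewClan m σ' s') :
    IsSkewClan n (gluePerm B hcard b σ' hbB hbinv h.1) (glueSign B hcard t s') := by
  obtain ⟨h1, h2, _, h4, h5⟩ := h
  set e := em B hcard with he
  have hg : ∀ i, (gluePerm B hcard b σ' hbB hbinv h1) i = glueFun B hcard b σ' i := fun _ => rfl
  have hrev4 : ∀ i, glueFun B hcard b σ' (Fin.rev i) = Fin.rev (glueFun B hcard b σ' i) := by
    intro i
    by_cases hi : i ∈ Bᶜ
    · have hri : Fin.rev i ∈ Bᶜ := compl_rev B hB i hi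
      rw [glueFun, dif_pos hri, glueFun, dif_pos hi]
      rw [em_symm_rev B hcard hB ⟨i, hi⟩ hri, h4, em_rev B hcard hB]
    · have hi' : i ∈ B := by simpa using hi
      rw [glueFun_of_mem B hcard b σ' (hB i hi'), glueFun_of_mem B hcard b σ' hi']
      exact hbrev i hi'
  have hrev5 : ∀ i, glueFun B hcard b σ' i = i →
      glueSign B hcard t s' (Fin.rev i) = !(glueSign B hcard t s' i) := by
    intro i hfix
    by_cases hi : i ∈ Bᶜ
    · have hri : Fin.rev i ∈ Bᶜ := compl_rev B hB i hi
      rw [glueSign, dif_pos hri, glueSign, dif_pos hi]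
      rw [em_symm_rev B hcard hB ⟨i, hi⟩ hri]
      apply h5
      rw [glueFun, dif_pos hi] at hfix
      apply (em B hcard).injective
      apply Subtype.ext
      rw [hfix]
      simp
    · have hi' : i ∈ B := by simpa using hi
      have hri : Fin.rev i ∈ B := hB i hi'
      rw [glueSign, dif_neg (by simpa using hri), glueSign, dif_neg (by simpa using hi')]
      apply ht2 i hi'
      rw [glueFun_of_mem B hcard b σ' hi'] at hfix
      exact hfix
  refine ⟨glueFun_involutive B hcard b σ' hbB hbinv h1, ?_, ?_, ?_, ?_⟩
  · intro i hne
    rw [hg] at hne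
    by_cases hi : i ∈ Bᶜ
    · rw [glueSign, dif_pos hi]
      apply h2
      intro hfix
      apply hne
      rw [glueFun, dif_pos hi, hfix]
      simp
    · have hi' : i ∈ B := by simpa using hi
      rw [glueSign, dif_neg (by simpa using hi')]
      apply ht1 i hi'
      rw [glueFun_of_mem B hcard b σ' hi'] at hne
      exact hne
  · exact balance _ _ (fun i => hrev4 i) (fun i => hrev5 i)
  · exact hrev4
  · exact hrev5

lemma glueSign_em (j : Fin (2*m)) :
    glueSign B hcard t s' ((em B hcard) j : Fin (2*n)) = s' j := by
  rw [glueSign, dif_pos ((em B hcard) j).2]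
  congr 1
  have h2 : (⟨((em B hcard) j : Fin (2*n)), ((em B hcard) j).2⟩ : {x : Fin (2*n) // x ∈ Bᶜ}) = (em B hcard) j := Subtype.ext rfl
  rw [h2, OrderIso.symm_apply_apply]

lemma glueSign_of_mem {i : Fin (2*n)} (h : i ∈ B) :
    glueSign B hcard t s' i = t i := by
  rw [glueSign, dif_neg (by simpa using h)]

variable (σ : Equiv.Perm (Fin (2*n))) (s : Fin (2*n) → Bool)

lemma compl_sigma (hinv : Function.Involutive σ) (hσB : ∀ i ∈ B, σ i ∈ B) :
    ∀ i, i ∈ Bᶜ → σ i ∈ Bᶜ := by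
  intro i hi
  simp only [Finset.mem_compl] at hi ⊢
  intro h
  exact hi (by simpa [hinv i] using hσB _ h)

def restrictFun (hinv : Function.Involutive σ) (hσB : ∀ i ∈ B, σ i ∈ B) :
    Fin (2*m) → Fin (2*m) := fun j =>
  (em B hcard).symm ⟨σ ((em B hcard) j : Fin (2*n)),
    compl_sigma B σ hinv hσB _ ((em B hcard) j).2⟩

lemma restrictFun_spec (hinv : Function.Involutive σ) (hσB : ∀ i ∈ B, σ i ∈ B) (j : Fin (2*m)) :
    ((em B hcard) (restrictFun B hcard σ hinv hσB j) : Fin (2*n)) = σ ((em B hcard) j : Fin (2*n)) := by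
  rw [restrictFun, OrderIso.apply_symm_apply]

lemma restrictFun_involutive (hinv : Function.Involutive σ) (hσB : ∀ i ∈ B, σ i ∈ B) :
    Function.Involutive (restrictFun B hcard σ hinv hσB) := by
  intro j
  apply (em B hcard).injective
  apply Subtype.ext
  rw [restrictFun_spec, restrictFun_spec]
  exact hinv _

def restrictPerm (hinv : Function.Involutive σ) (hσB : ∀ i ∈ B, σ i ∈ B) :
    Equiv.Perm (Fin (2*m)) :=
  (restrictFun_involutive B hcard σ hinv hσB).toPerm

def restrictSign : Fin (2*m) → Bool := fun j => s ((em B hcard) j : Fin (2*n))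

lemma restrictFun_fix_iff (hinv : Function.Involutive σ) (hσB : ∀ i ∈ B, σ i ∈ B) (j : Fin (2*m)) :
    restrictFun B hcard σ hinv hσB j = j ↔ σ ((em B hcard) j : Fin (2*n)) = ((em B hcard) j : Fin (2*n)) := by
  constructor
  · intro h
    have := congrArg (fun x => ((em B hcard) x : Fin (2*n))) h
    simpa [restrictFun_spec] using this
  · intro h
    apply (em B hcard).injective
    apply Subtype.ext
    rw [restrictFun_spec]
    exact h

include hB in
lemma restrict_isSkewClan (h : IsSkewClan n σ s) (hσB : ∀ i ∈ B, σ i ∈ B) :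
    IsSkewClan m (restrictPerm B hcard σ h.1 hσB) (restrictSign B hcard s) := by
  obtain ⟨h1, h2, _, h4, h5⟩ := h
  have hfix := restrictFun_fix_iff B hcard σ h1 hσB
  have hr4 : ∀ j, restrictFun B hcard σ h1 hσB (Fin.rev j) = Fin.rev (restrictFun B hcard σ h1 hσB j) := by
    intro j
    apply (em B hcard).injective
    apply Subtype.ext
    rw [restrictFun_spec, em_rev B hcard hB, em_rev B hcard hB, h4, restrictFun_spec]
  have hr5 : ∀ j, restrictFun B hcard σ h1 hσB j = j →
      restrictSign B hcard s (Fin.rev j) = !(restrictSign B hcard s j) := by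
    intro j hj
    rw [restrictSign, restrictSign, em_rev B hcard hB]
    exact h5 _ ((hfix j).mp hj)
  refine ⟨restrictFun_involutive B hcard σ h1 hσB, ?_, ?_, hr4, hr5⟩
  · intro j hj
    exact h2 _ (fun hc => hj ((hfix j).mpr hc))
  · exact balance _ _ hr4 hr5

lemma glueFun_restrict (hinv : Function.Involutive σ) (hσB : ∀ i ∈ B, σ i ∈ B)
    (hagree : ∀ i ∈ B, b i = σ i) (i : Fin (2*n)) :
    glueFun B hcard b (restrictPerm B hcard σ hinv hσB) i = σ i := by
  by_cases hi : i ∈ Bᶜ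
  · rw [glueFun, dif_pos hi]
    have : (restrictPerm B hcard σ hinv hσB) ((em B hcard).symm ⟨i, hi⟩)
        = restrictFun B hcard σ hinv hσB ((em B hcard).symm ⟨i, hi⟩) := rfl
    rw [this, restrictFun_spec, OrderIso.apply_symm_apply]
  · have hi' : i ∈ B := by simpa using hi
    rw [glueFun_of_mem B hcard b _ hi']
    exact hagree i hi'

lemma glueSign_restrict (hagreet : ∀ i ∈ B, t i = s i) (i : Fin (2*n)) :
    glueSign B hcard t (restrictSign B hcard s) i = s i := by
  by_cases hi : i ∈ Bᶜ
  · rw [glueSign, dif_pos hi, restrictSign, OrderIso.apply_symm_apply]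
  · have hi' : i ∈ B := by simpa using hi
    rw [glueSign_of_mem B hcard t _ hi']
    exact hagreet i hi'

end Glue

/-- The type of skew clans. -/
def ClanT (k : ℕ) := {p : Equiv.Perm (Fin (2 * k)) × (Fin (2 * k) → Bool) // IsSkewClan k p.1 p.2}

instance (k : ℕ) : Finite (ClanT k) := by unfold ClanT; infer_instance

lemma Znum_eq (k : ℕ) : Znum k = Nat.card (ClanT k) := rfl

section Cases

variable (n : ℕ)

def pt0 : Fin (2*(n+2)) := ⟨0, by omega⟩

lemma pt0_ne_rev : pt0 n ≠ (pt0 n).rev := (rev_ne (pt0 n)).symm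

def B1 : Finset (Fin (2*(n+2))) := {pt0 n, (pt0 n).rev}

lemma mem_B1 (i : Fin (2*(n+2))) : i ∈ B1 n ↔ i = pt0 n ∨ i = (pt0 n).rev := by
  simp [B1]

lemma B1_rev : ∀ i ∈ B1 n, Fin.rev i ∈ B1 n := by
  intro i hi
  rcases (mem_B1 n i).mp hi with h | h <;> subst h <;>
    simp [mem_B1, Fin.rev_rev]

lemma B1_card : (B1 n)ᶜ.card = 2*(n+1) := by
  rw [Finset.card_compl]
  have h2 : (B1 n).card = 2 := by
    rw [B1, Finset.card_insert_of_notMem (by simp [pt0_ne_rev n]), Finset.card_singleton]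
  rw [h2]
  simp only [Fintype.card_fin]
  omega

def t1 (v : Bool) : Fin (2*(n+2)) → Bool := fun i =>
  if i = pt0 n then v else if i = (pt0 n).rev then !v else true

lemma t1_spec (v : Bool) : ∀ i ∈ B1 n, t1 n v (Fin.rev i) = !(t1 n v i) := by
  intro i hi
  have hne := pt0_ne_rev n
  rcases (mem_B1 n i).mp hi with h | h <;> subst h
  · rw [t1, t1]
    rw [if_neg (Ne.symm hne), if_pos rfl, if_pos rfl]
  · rw [t1, t1, Fin.rev_rev]
    rw [if_pos rfl, if_neg (Ne.symm hne), if_pos rfl, Bool.not_not]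

def b2 : Fin (2*(n+2)) → Fin (2*(n+2)) := fun i =>
  if i = pt0 n then (pt0 n).rev else if i = (pt0 n).rev then pt0 n else i

lemma b2_pt0 : b2 n (pt0 n) = (pt0 n).rev := by rw [b2, if_pos rfl]

lemma b2_rev_pt0 : b2 n ((pt0 n).rev) = pt0 n := by
  rw [b2, if_neg (Ne.symm (pt0_ne_rev n)), if_pos rfl]

lemma b2_memB : ∀ i ∈ B1 n, b2 n i ∈ B1 n := by
  intro i hi
  rcases (mem_B1 n i).mp hi with h | h <;> subst h <;>
    simp [b2_pt0, b2_rev_pt0, mem_B1]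

lemma b2_inv : ∀ i ∈ B1 n, b2 n (b2 n i) = i := by
  intro i hi
  rcases (mem_B1 n i).mp hi with h | h <;> subst h <;>
    simp [b2_pt0, b2_rev_pt0]

lemma b2_rev : ∀ i ∈ B1 n, b2 n (Fin.rev i) = Fin.rev (b2 n i) := by
  intro i hi
  rcases (mem_B1 n i).mp hi with h | h <;> subst h
  · rw [b2_pt0, b2_rev_pt0, Fin.rev_rev]
  · rw [Fin.rev_rev, b2_pt0, b2_rev_pt0]

lemma b2_ne : ∀ i ∈ B1 n, b2 n i ≠ i := by
  intro i hi
  rcases (mem_B1 n i).mp hi with h | h <;> subst h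
  · rw [b2_pt0]; exact (pt0_ne_rev n).symm
  · rw [b2_rev_pt0]; exact pt0_ne_rev n

/-- psi1: case σ(0) = 0, with sign v at position 0. -/
def psi1 (v : Bool) (c : ClanT (n+1)) : ClanT (n+2) :=
  ⟨(gluePerm (B1 n) (B1_card n) id c.1.1 (fun _ hi => hi) (fun _ _ => rfl) c.2.1,
    glueSign (B1 n) (B1_card n) (t1 n v) c.1.2),
    extend_isSkewClan (B1 n) (B1_card n) (B1_rev n) id c.1.1 (t1 n v) c.1.2
      (fun _ hi => hi) (fun _ _ => rfl) (fun _ _ => rfl)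
      (fun _ _ h => absurd rfl h) (fun i hi _ => t1_spec n v i hi) c.2⟩

/-- psi2: case σ(0) = rev 0. -/
def psi2 (c : ClanT (n+1)) : ClanT (n+2) :=
  ⟨(gluePerm (B1 n) (B1_card n) (b2 n) c.1.1 (b2_memB n) (b2_inv n) c.2.1,
    glueSign (B1 n) (B1_card n) (fun _ => true) c.1.2),
    extend_isSkewClan (B1 n) (B1_card n) (B1_rev n) (b2 n) c.1.1 (fun _ => true) c.1.2
      (b2_memB n) (b2_inv n) (b2_rev n)
      (fun _ _ _ => rfl) (fun i hi h => absurd h (b2_ne n i hi)) c.2⟩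

end Cases

section Case3

variable {n : ℕ} (j : Fin (2*(n+2))) (hj1 : j ≠ pt0 n) (hj2 : j ≠ (pt0 n).rev)

def B3 : Finset (Fin (2*(n+2))) := {pt0 n, (pt0 n).rev, j, j.rev}

lemma mem_B3 (i : Fin (2*(n+2))) :
    i ∈ B3 j ↔ i = pt0 n ∨ i = (pt0 n).rev ∨ i = j ∨ i = Fin.rev j := by
  simp [B3]

lemma B3_rev : ∀ i ∈ B3 j, Fin.rev i ∈ B3 j := by
  intro i hi
  rcases (mem_B3 j i).mp hi with h | h | h | h <;> subst h <;>
    simp [mem_B3, Fin.rev_rev]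

include hj1 hj2 in
lemma B3_card : (B3 j)ᶜ.card = 2*n := by
  have d1 := pt0_ne_rev n
  have d2 : j ≠ Fin.rev j := (rev_ne j).symm
  have d3 : Fin.rev j ≠ pt0 n := by
    intro h
    exact hj2 (by rw [← h, Fin.rev_rev])
  have d4 : Fin.rev j ≠ (pt0 n).rev := fun h => hj1 (Fin.rev_injective h)
  rw [Finset.card_compl]
  have h4 : (B3 j).card = 4 := by
    rw [B3]
    rw [Finset.card_insert_of_notMem (by simp [hj1.symm, d3.symm, d1]),
      Finset.card_insert_of_notMem (by simp [hj2.symm, d4.symm]),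
      Finset.card_insert_of_notMem (by simp [d2]), Finset.card_singleton]
  rw [h4]
  simp only [Fintype.card_fin]
  omega

def b3 : Fin (2*(n+2)) → Fin (2*(n+2)) := fun i =>
  if i = pt0 n then j else if i = j then pt0 n
  else if i = (pt0 n).rev then Fin.rev j else if i = Fin.rev j then (pt0 n).rev else i

include hj1 hj2

lemma b3_pt0 : b3 j (pt0 n) = j := by rw [b3, if_pos rfl]

lemma b3_j : b3 j j = pt0 n := by rw [b3, if_neg hj1, if_pos rfl]

lemma b3_rev_pt0 : b3 j ((pt0 n).rev) = Fin.rev j := by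
  rw [b3, if_neg (Ne.symm (pt0_ne_rev n)), if_neg (Ne.symm hj2), if_pos rfl]

lemma b3_rev_j : b3 j (Fin.rev j) = (pt0 n).rev := by
  have d3 : Fin.rev j ≠ pt0 n := by
    intro h
    exact hj2 (by rw [← h, Fin.rev_rev])
  have d4 : Fin.rev j ≠ (pt0 n).rev := fun h => hj1 (Fin.rev_injective h)
  have d2 : Fin.rev j ≠ j := rev_ne j
  rw [b3, if_neg d3, if_neg d2, if_neg d4, if_pos rfl]

lemma b3_memB : ∀ i ∈ B3 j, b3 j i ∈ B3 j := by
  intro i hi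
  rcases (mem_B3 j i).mp hi with h | h | h | h <;> rw [h] <;>
    simp [b3_pt0 j hj1 hj2, b3_j j hj1 hj2, b3_rev_pt0 j hj1 hj2, b3_rev_j j hj1 hj2, mem_B3]

lemma b3_inv : ∀ i ∈ B3 j, b3 j (b3 j i) = i := by
  intro i hi
  rcases (mem_B3 j i).mp hi with h | h | h | h <;> rw [h] <;>
    simp [b3_pt0 j hj1 hj2, b3_j j hj1 hj2, b3_rev_pt0 j hj1 hj2, b3_rev_j j hj1 hj2]

lemma b3_rev : ∀ i ∈ B3 j, b3 j (Fin.rev i) = Fin.rev (b3 j i) := by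
  intro i hi
  rcases (mem_B3 j i).mp hi with h | h | h | h <;> rw [h] <;>
    simp [b3_pt0 j hj1 hj2, b3_j j hj1 hj2, b3_rev_pt0 j hj1 hj2, b3_rev_j j hj1 hj2,
      Fin.rev_rev]

lemma b3_ne : ∀ i ∈ B3 j, b3 j i ≠ i := by
  have d3 : Fin.rev j ≠ pt0 n := by
    intro h
    exact hj2 (by rw [← h, Fin.rev_rev])
  have d4 : Fin.rev j ≠ (pt0 n).rev := fun h => hj1 (Fin.rev_injective h)
  intro i hi
  rcases (mem_B3 j i).mp hi with h | h | h | h <;> rw [h]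
  · rw [b3_pt0 j hj1 hj2]; exact hj1
  · rw [b3_rev_pt0 j hj1 hj2]; exact d4
  · rw [b3_j j hj1 hj2]; exact Ne.symm hj1
  · rw [b3_rev_j j hj1 hj2]; exact Ne.symm d4

/-- psi3: case σ(0) = j, with j not 0 or rev 0. -/
def psi3 (c : ClanT n) : ClanT (n+2) :=
  ⟨(gluePerm (B3 j) (B3_card j hj1 hj2) (b3 j) c.1.1 (b3_memB j hj1 hj2) (b3_inv j hj1 hj2) c.2.1,
    glueSign (B3 j) (B3_card j hj1 hj2) (fun _ => true) c.1.2),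
    extend_isSkewClan (B3 j) (B3_card j hj1 hj2) (B3_rev j) (b3 j) c.1.1 (fun _ => true) c.1.2
      (b3_memB j hj1 hj2) (b3_inv j hj1 hj2) (b3_rev j hj1 hj2)
      (fun _ _ _ => rfl) (fun i hi h => absurd h (b3_ne j hj1 hj2 i hi)) c.2⟩

end Case3

section InjSurj

lemma glueFun_inj_sigma {n m : ℕ} (B : Finset (Fin (2*n))) (hcard : Bᶜ.card = 2*m)
    (b b' : Fin (2*n) → Fin (2*n)) (σ'1 σ'2 : Equiv.Perm (Fin (2*m)))
    (h : ∀ i, glueFun B hcard b σ'1 i = glueFun B hcard b' σ'2 i) : σ'1 = σ'2 := by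
  apply Equiv.ext
  intro k
  have hk := h ((em B hcard) k : Fin (2*n))
  rw [glueFun_em, glueFun_em] at hk
  exact (em B hcard).injective (Subtype.ext hk)

lemma glueSign_inj {n m : ℕ} (B : Finset (Fin (2*n))) (hcard : Bᶜ.card = 2*m)
    (t t' : Fin (2*n) → Bool) (s'1 s'2 : Fin (2*m) → Bool)
    (h : ∀ i, glueSign B hcard t s'1 i = glueSign B hcard t' s'2 i) : s'1 = s'2 := by
  funext k
  have hk := h ((em B hcard) k : Fin (2*n))
  rwa [glueSign_em, glueSign_em] at hk

variable {n : ℕ}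

lemma pt0_mem_B1 : pt0 n ∈ B1 n := (mem_B1 n _).mpr (Or.inl rfl)

lemma pt0_mem_B3 (j : Fin (2*(n+2))) : pt0 n ∈ B3 j := (mem_B3 j _).mpr (Or.inl rfl)

lemma psi1_sigma_pt0 (v : Bool) (c : ClanT (n+1)) : (psi1 n v c).1.1 (pt0 n) = pt0 n := by
  have h : (psi1 n v c).1.1 (pt0 n) = glueFun (B1 n) (B1_card n) id c.1.1 (pt0 n) := rfl
  rw [h, glueFun_of_mem _ _ _ _ pt0_mem_B1]; rfl

lemma psi1_s_pt0 (v : Bool) (c : ClanT (n+1)) : (psi1 n v c).1.2 (pt0 n) = v := by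
  have h : (psi1 n v c).1.2 (pt0 n) = glueSign (B1 n) (B1_card n) (t1 n v) c.1.2 (pt0 n) := rfl
  rw [h, glueSign_of_mem _ _ _ _ pt0_mem_B1, t1, if_pos rfl]

lemma psi2_sigma_pt0 (c : ClanT (n+1)) : (psi2 n c).1.1 (pt0 n) = (pt0 n).rev := by
  have h : (psi2 n c).1.1 (pt0 n) = glueFun (B1 n) (B1_card n) (b2 n) c.1.1 (pt0 n) := rfl
  rw [h, glueFun_of_mem _ _ _ _ pt0_mem_B1, b2_pt0]

lemma psi3_sigma_pt0 (j : Fin (2*(n+2))) (hj1 : j ≠ pt0 n) (hj2 : j ≠ (pt0 n).rev)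
    (c : ClanT n) : (psi3 j hj1 hj2 c).1.1 (pt0 n) = j := by
  have h : (psi3 j hj1 hj2 c).1.1 (pt0 n) =
      glueFun (B3 j) (B3_card j hj1 hj2) (b3 j) c.1.1 (pt0 n) := rfl
  rw [h, glueFun_of_mem _ _ _ _ (pt0_mem_B3 j), b3_pt0 j hj1 hj2]

lemma psi1_inj {v v' : Bool} {c c' : ClanT (n+1)} (h : psi1 n v c = psi1 n v' c') :
    v = v' ∧ c = c' := by
  constructor
  · rw [← psi1_s_pt0 v c, ← psi1_s_pt0 v' c', h]
  · have hp : c.1.1 = c'.1.1 := by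
      apply glueFun_inj_sigma (B1 n) (B1_card n) id id
      intro i
      exact DFunLike.congr_fun (congrArg (fun x => x.1.1) h) i
    have hs : c.1.2 = c'.1.2 := by
      apply glueSign_inj (B1 n) (B1_card n) (t1 n v) (t1 n v')
      intro i
      exact congrFun (congrArg (fun x => x.1.2) h) i
    exact Subtype.ext (Prod.ext hp hs)

lemma psi2_inj {c c' : ClanT (n+1)} (h : psi2 n c = psi2 n c') : c = c' := by
  have hp : c.1.1 = c'.1.1 := by
    apply glueFun_inj_sigma (B1 n) (B1_card n) (b2 n) (b2 n)
    intro i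
    exact DFunLike.congr_fun (congrArg (fun x => x.1.1) h) i
  have hs : c.1.2 = c'.1.2 := by
    apply glueSign_inj (B1 n) (B1_card n) (fun _ => true) (fun _ => true)
    intro i
    exact congrFun (congrArg (fun x => x.1.2) h) i
  exact Subtype.ext (Prod.ext hp hs)

lemma psi3_inj {j : Fin (2*(n+2))} {hj1 : j ≠ pt0 n} {hj2 : j ≠ (pt0 n).rev}
    {c c' : ClanT n} (h : psi3 j hj1 hj2 c = psi3 j hj1 hj2 c') : c = c' := by
  have hp : c.1.1 = c'.1.1 := by
    apply glueFun_inj_sigma (B3 j) (B3_card j hj1 hj2) (b3 j) (b3 j)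
    intro i
    exact DFunLike.congr_fun (congrArg (fun x => x.1.1) h) i
  have hs : c.1.2 = c'.1.2 := by
    apply glueSign_inj (B3 j) (B3_card j hj1 hj2) (fun _ => true) (fun _ => true)
    intro i
    exact congrFun (congrArg (fun x => x.1.2) h) i
  exact Subtype.ext (Prod.ext hp hs)

lemma surj1 (c : ClanT (n+2)) (h0 : c.1.1 (pt0 n) = pt0 n) :
    ∃ v c', psi1 n v c' = c := by
  obtain ⟨h1, h2, h3, h4, h5⟩ := c.2
  have hσB : ∀ i ∈ B1 n, c.1.1 i ∈ B1 n := by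
    intro i hi
    rcases (mem_B1 n i).mp hi with h | h <;> rw [h]
    · rw [h0]; exact pt0_mem_B1
    · rw [h4, h0]; exact (mem_B1 n _).mpr (Or.inr rfl)
  refine ⟨c.1.2 (pt0 n),
    ⟨(restrictPerm (B1 n) (B1_card n) c.1.1 h1 hσB, restrictSign (B1 n) (B1_card n) c.1.2),
      restrict_isSkewClan (B1 n) (B1_card n) (B1_rev n) c.1.1 c.1.2 c.2 hσB⟩, ?_⟩
  apply Subtype.ext
  apply Prod.ext
  · apply Equiv.ext
    intro i
    exact glueFun_restrict (B1 n) (B1_card n) id c.1.1 h1 hσB (by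
      intro i hi
      rcases (mem_B1 n i).mp hi with h | h <;> rw [h]
      · exact h0.symm
      · rw [h4, h0]; rfl) i
  · funext i
    apply glueSign_restrict (B1 n) (B1_card n) (t1 n (c.1.2 (pt0 n))) c.1.2 (by
      intro i hi
      rcases (mem_B1 n i).mp hi with h | h <;> rw [h]
      · rw [t1, if_pos rfl]
      · rw [t1, if_neg (Ne.symm (pt0_ne_rev n)), if_pos rfl, (h5 _ h0)]) i

lemma surj2 (c : ClanT (n+2)) (h0 : c.1.1 (pt0 n) = (pt0 n).rev) :
    ∃ c', psi2 n c' = c := by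
  obtain ⟨h1, h2, h3, h4, h5⟩ := c.2
  have hrr : c.1.1 ((pt0 n).rev) = pt0 n := by rw [h4, h0, Fin.rev_rev]
  have hσB : ∀ i ∈ B1 n, c.1.1 i ∈ B1 n := by
    intro i hi
    rcases (mem_B1 n i).mp hi with h | h <;> rw [h]
    · rw [h0]; exact (mem_B1 n _).mpr (Or.inr rfl)
    · rw [hrr]; exact pt0_mem_B1
  refine ⟨⟨(restrictPerm (B1 n) (B1_card n) c.1.1 h1 hσB, restrictSign (B1 n) (B1_card n) c.1.2),
      restrict_isSkewClan (B1 n) (B1_card n) (B1_rev n) c.1.1 c.1.2 c.2 hσB⟩, ?_⟩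
  apply Subtype.ext
  apply Prod.ext
  · apply Equiv.ext
    intro i
    exact glueFun_restrict (B1 n) (B1_card n) (b2 n) c.1.1 h1 hσB (by
      intro i hi
      rcases (mem_B1 n i).mp hi with h | h <;> rw [h]
      · rw [b2_pt0, h0]
      · rw [b2_rev_pt0, hrr]) i
  · funext i
    apply glueSign_restrict (B1 n) (B1_card n) (fun _ => true) c.1.2 (by
      intro i hi
      rcases (mem_B1 n i).mp hi with h | h <;> rw [h]
      · exact (h2 _ (by rw [h0]; exact (pt0_ne_rev n).symm)).symm
      · exact (h2 _ (by rw [hrr]; exact pt0_ne_rev n)).symm) i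

lemma surj3 (c : ClanT (n+2)) (hj1 : c.1.1 (pt0 n) ≠ pt0 n)
    (hj2 : c.1.1 (pt0 n) ≠ (pt0 n).rev) :
    ∃ c', psi3 (c.1.1 (pt0 n)) hj1 hj2 c' = c := by
  obtain ⟨h1, h2, h3, h4, h5⟩ := c.2
  set j := c.1.1 (pt0 n) with hjdef
  have hj : c.1.1 j = pt0 n := by rw [hjdef]; exact h1 _
  have hrp : c.1.1 ((pt0 n).rev) = Fin.rev j := by rw [h4, hjdef]
  have hrj : c.1.1 (Fin.rev j) = (pt0 n).rev := by rw [h4, hj]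
  have hσB : ∀ i ∈ B3 j, c.1.1 i ∈ B3 j := by
    intro i hi
    rcases (mem_B3 j i).mp hi with h | h | h | h <;> rw [h] <;>
      simp only [← hjdef, hj, hrp, hrj, mem_B3] <;> tauto
  refine ⟨⟨(restrictPerm (B3 j) (B3_card j hj1 hj2) c.1.1 h1 hσB,
      restrictSign (B3 j) (B3_card j hj1 hj2) c.1.2),
      restrict_isSkewClan (B3 j) (B3_card j hj1 hj2) (B3_rev j) c.1.1 c.1.2 c.2 hσB⟩, ?_⟩
  apply Subtype.ext
  apply Prod.ext
  · apply Equiv.ext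
    intro i
    exact glueFun_restrict (B3 j) (B3_card j hj1 hj2) (b3 j) c.1.1 h1 hσB (by
      intro i hi
      rcases (mem_B3 j i).mp hi with h | h | h | h <;> rw [h]
      · rw [b3_pt0 j hj1 hj2, hjdef]
      · rw [b3_rev_pt0 j hj1 hj2, hrp]
      · rw [b3_j j hj1 hj2, hj]
      · rw [b3_rev_j j hj1 hj2, hrj]) i
  · funext i
    apply glueSign_restrict (B3 j) (B3_card j hj1 hj2) (fun _ => true) c.1.2 (by
      have d2 : Fin.rev j ≠ (pt0 n).rev := fun h => hj1 (Fin.rev_injective h)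
      intro i hi
      rcases (mem_B3 j i).mp hi with h | h | h | h <;> rw [h]
      · exact (h2 _ (by rw [← hjdef]; exact hj1)).symm
      · exact (h2 _ (by rw [hrp]; exact d2)).symm
      · exact (h2 _ (by rw [hj]; exact Ne.symm hj1)).symm
      · exact (h2 _ (by rw [hrj]; exact Ne.symm d2)).symm) i

end InjSurj

section Count

variable (n : ℕ)

abbrev Jt := {j : Fin (2*(n+2)) // j ≠ pt0 n ∧ j ≠ (pt0 n).rev}

def Psi : (Bool × ClanT (n+1)) ⊕ ClanT (n+1) ⊕ (Jt n × ClanT n) → ClanT (n+2)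
  | .inl (v, c) => psi1 n v c
  | .inr (.inl c) => psi2 n c
  | .inr (.inr (j, c)) => psi3 j.1 j.2.1 j.2.2 c

lemma Psi_bijective : Function.Bijective (Psi n) := by
  constructor
  · rintro (⟨v, c⟩ | c | ⟨⟨j, hja, hjb⟩, c⟩) (⟨v', c'⟩ | c' | ⟨⟨j', hja', hjb'⟩, c'⟩) h <;>
      simp only [Psi] at h
    · obtain ⟨hv, hc⟩ := psi1_inj h
      rw [hv, hc]
    · exfalso
      have := (psi1_sigma_pt0 v c).symm.trans
        ((congrArg (fun x => x.1.1 (pt0 n)) h).trans (psi2_sigma_pt0 c'))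
      exact pt0_ne_rev n this
    · exfalso
      have := (psi1_sigma_pt0 v c).symm.trans
        ((congrArg (fun x => x.1.1 (pt0 n)) h).trans (psi3_sigma_pt0 j' hja' hjb' c'))
      exact hja' this.symm
    · exfalso
      have := (psi2_sigma_pt0 c).symm.trans
        ((congrArg (fun x => x.1.1 (pt0 n)) h).trans (psi1_sigma_pt0 v' c'))
      exact pt0_ne_rev n this.symm
    · rw [psi2_inj h]
    · exfalso
      have := (psi2_sigma_pt0 c).symm.trans
        ((congrArg (fun x => x.1.1 (pt0 n)) h).trans (psi3_sigma_pt0 j' hja' hjb' c'))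
      exact hjb' this.symm
    · exfalso
      have := (psi3_sigma_pt0 j hja hjb c).symm.trans
        ((congrArg (fun x => x.1.1 (pt0 n)) h).trans (psi1_sigma_pt0 v' c'))
      exact hja this
    · exfalso
      have := (psi3_sigma_pt0 j hja hjb c).symm.trans
        ((congrArg (fun x => x.1.1 (pt0 n)) h).trans (psi2_sigma_pt0 c'))
      exact hjb this
    · have hjj : j = j' := (psi3_sigma_pt0 j hja hjb c).symm.trans
        ((congrArg (fun x => x.1.1 (pt0 n)) h).trans (psi3_sigma_pt0 j' hja' hjb' c'))
      subst hjj
      rw [psi3_inj h]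
  · intro c
    by_cases h0 : c.1.1 (pt0 n) = pt0 n
    · obtain ⟨v, c', hc⟩ := surj1 c h0
      exact ⟨.inl (v, c'), hc⟩
    · by_cases h0' : c.1.1 (pt0 n) = (pt0 n).rev
      · obtain ⟨c', hc⟩ := surj2 c h0'
        exact ⟨.inr (.inl c'), hc⟩
      · obtain ⟨c', hc⟩ := surj3 c h0 h0'
        exact ⟨.inr (.inr (⟨c.1.1 (pt0 n), h0, h0'⟩, c')), hc⟩

lemma Jt_card : Nat.card (Jt n) = 2*(n+1) := by
  rw [Nat.card_eq_fintype_card, Fintype.card_subtype]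
  have h : Finset.univ.filter (fun j : Fin (2*(n+2)) => j ≠ pt0 n ∧ j ≠ (pt0 n).rev)
      = (B1 n)ᶜ := by
    ext x
    simp [mem_B1, B1, not_or]
  rw [h, B1_card]

lemma Znum_rec : Znum (n+2) = 3 * Znum (n+1) + 2*(n+1) * Znum n := by
  have hcongr := Nat.card_congr (Equiv.ofBijective (Psi n) (Psi_bijective n))
  rw [Znum_eq, ← hcongr, Nat.card_sum, Nat.card_sum, Nat.card_prod, Nat.card_prod,
    Jt_card, Nat.card_eq_fintype_card (α := Bool)]
  rw [Znum_eq, Znum_eq]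
  simp [Fintype.card_bool]
  ring

end Count

end SkewClanAux

instance instDecIsSkewClan (n : ℕ) (σ : Equiv.Perm (Fin (2*n))) (s : Fin (2*n) → Bool) :
    Decidable (IsSkewClan n σ s) := by
  unfold IsSkewClan Function.Involutive; infer_instance

lemma Znum_zero : Znum 0 = 1 := by
  have h : Znum 0 = Fintype.card
      {p : Equiv.Perm (Fin (2*0)) × (Fin (2*0) → Bool) // IsSkewClan 0 p.1 p.2} :=
    Nat.card_eq_fintype_card
  rw [h]
  decide

lemma Znum_one : Znum 1 = 3 := by
  have h : Znum 1 = Fintype.card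
      {p : Equiv.Perm (Fin (2*1)) × (Fin (2*1) → Bool) // IsSkewClan 1 p.1 p.2} :=
    Nat.card_eq_fintype_card
  rw [h]
  decide


/-- `Z_0 = 1`, `Z_1 = 3`, and `Z_n = 3·Z_{n−1} + 2(n−1)·Z_{n−2}` for `n ≥ 2`. -/
theorem stmt7 :
    Znum 0 = 1 ∧ Znum 1 = 3 ∧
    ∀ n : ℕ, 2 ≤ n → Znum n = 3 * Znum (n - 1) + 2 * (n - 1) * Znum (n - 2) := by
  refine ⟨Znum_zero, Znum_one, ?_⟩
  intro n hn
  obtain ⟨k, rfl⟩ : ∃ k, n = k + 2 := ⟨n - 2, by omega⟩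
  exact SkewClanAux.Znum_rec k
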